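/- Let (π_X, v, w, H, K) be a covariant representation of (G,η,X), let V ∈ L(H), let W ∈ L(K) be a coisometry, and let t ↦ u_t, t ↦ u'_t be unitary representations of G on H and K such that v_t V = V u_t and w_t W = W u'_t for all t ∈ G. Then Φ(x) := W* π_X(x) V defines a completely positive map on X which is (u',u)-covariant: Φ(η_t(x)) = u'_t Φ(x) u_t* for all x ∈ X and t ∈ G. -/
import Mathlib


noncomputable section

open ContinuousLinearMap

/-- An element of the form `star c * c` (positivity in a star ring). -/
def StarPos {B : Type*} [Mul B] [Star B] (b : B) : Prop := ∃ c : B, b = star c * c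

/-- Complete positivity of a `ℂ`-linear map between star rings. -/
def IsCPMap {A B : Type*} [NonUnitalRing A] [StarRing A] [Module ℂ A]
    [NonUnitalRing B] [StarRing B] [Module ℂ B] (φ : A →ₗ[ℂ] B) : Prop :=
  ∀ (n : ℕ) (M : Matrix (Fin n) (Fin n) A), StarPos M → StarPos (M.map ⇑φ)

/-- A unitary representation of a group `G` on a Hilbert space. -/
def IsUnitaryRep {G H' : Type*} [Group G] [NormedAddCommGroup H']
    [InnerProductSpace ℂ H'] [CompleteSpace H'] (v : G → H' →L[ℂ] H') : Prop :=
  v 1 = 1 ∧ (∀ s t, v (s * t) = v s ∘L v t) ∧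
    ∀ t, adjoint (v t) ∘L v t = 1 ∧ v t ∘L adjoint (v t) = 1

/-- given a covariant representation `(π_X,v,w,H,K)` of `(G,η,X)`,
`V ∈ L(H)`, a coisometry `W ∈ L(K)`, and unitary representations `u, u'` with
`v_t V = V u_t` and `w_t W = W u'_t`, the map `Φ(x) = W* π_X(x) V` is a completely
positive map on `X` which is `(u',u)`-covariant. -/
theorem stmt_7
    {A : Type*} [NormedRing A] [StarRing A] [CStarRing A] [NormedAlgebra ℂ A]
    [CompleteSpace A] [StarModule ℂ A]
    {H K : Type*} [NormedAddCommGroup H] [InnerProductSpace ℂ H] [CompleteSpace H]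
    [NormedAddCommGroup K] [InnerProductSpace ℂ K] [CompleteSpace K]
    {X : Type*} {G : Type*} [Group G]
    (E : X → X → A)
    (hfull : (Submodule.span ℂ {a : A | ∃ x y, a = E x y}).topologicalClosure = ⊤)
    (η : G → X → X) (hη_one : ∀ x, η 1 x = x)
    (hη_mul : ∀ s t x, η (s * t) x = η s (η t x))
    (πX : X → H →L[ℂ] K) (πA : A →⋆ₐ[ℂ] (H →L[ℂ] H))
    (hrep : ∀ x y, adjoint (πX x) ∘L πX y = πA (E x y))
    (v : G → H →L[ℂ] H) (hv : IsUnitaryRep v)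
    (w : G → K →L[ℂ] K) (hw : IsUnitaryRep w)
    (hcov : ∀ t x, πX (η t x) = w t ∘L πX x ∘L adjoint (v t))
    (V : H →L[ℂ] H) (W : K →L[ℂ] K) (hW : W ∘L adjoint W = 1)
    (u : G → H →L[ℂ] H) (hu : IsUnitaryRep u)
    (u' : G → K →L[ℂ] K) (hu' : IsUnitaryRep u')
    (hVint : ∀ t, v t ∘L V = V ∘L u t)
    (hWint : ∀ t, w t ∘L W = W ∘L u' t) :
    (∃ ψ : A →ₗ[ℂ] (H →L[ℂ] H), IsCPMap ψ ∧
        ∀ x y,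
          adjoint (adjoint W ∘L πX x ∘L V) ∘L (adjoint W ∘L πX y ∘L V) = ψ (E x y)) ∧
      ∀ t x,
        adjoint W ∘L πX (η t x) ∘L V =
          u' t ∘L (adjoint W ∘L πX x ∘L V) ∘L adjoint (u t) := by
  classical
  -- intertwining facts
  have hvV : ∀ t, adjoint (v t) ∘L V = V ∘L adjoint (u t) := by
    intro t
    show star (v t) * V = V * star (u t)
    have h : v t * V = V * u t := hVint t
    have h1 : star (v t) * v t = 1 := (hv.2.2 t).1
    have h2 : u t * star (u t) = 1 := (hu.2.2 t).2
    have key : star (v t) * (v t * V) * star (u t)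
        = star (v t) * (V * u t) * star (u t) := by rw [h]
    rw [← mul_assoc (star (v t)) (v t) V, h1, one_mul,
      mul_assoc (star (v t)) (V * u t) (star (u t)),
      mul_assoc V (u t) (star (u t)), h2, mul_one] at key
    exact key.symm
  have hWw : ∀ t, adjoint W ∘L w t = u' t ∘L adjoint W := by
    intro t
    show star W * w t = u' t * star W
    have h : w t * W = W * u' t := hWint t
    have h' : star (u' t) * star W = star W * star (w t) := by
      have := congrArg star h
      rw [star_mul, star_mul] at this
      exact this.symm
    have h1 : star (w t) * w t = 1 := (hw.2.2 t).1
    have h2 : u' t * star (u' t) = 1 := (hu'.2.2 t).2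
    have key : u' t * (star (u' t) * star W) * w t
        = u' t * (star W * star (w t)) * w t := by rw [h']
    rw [← mul_assoc (u' t) (star (u' t)) (star W), h2, one_mul,
      mul_assoc (u' t) (star W * star (w t)) (w t),
      mul_assoc (star W) (star (w t)) (w t), h1, mul_one] at key
    exact key
  constructor
  · -- the completely positive map ψ(a) = V* πA(a) V
    refine ⟨{ toFun := fun a => adjoint V ∘L πA a ∘L V
              map_add' := by intro a b; simp [map_add, add_comp, comp_add]
              map_smul' := by intro c a; simp [map_smul, smul_comp, comp_smul] }, ?_, ?_⟩
    · intro n M hM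
      obtain ⟨c, rfl⟩ := hM
      refine ⟨c.map (fun a => πA a ∘L V), Matrix.ext fun i j => ?_⟩
      simp only [Matrix.map_apply, Matrix.mul_apply, Matrix.star_apply,
        LinearMap.coe_mk, AddHom.coe_mk]
      rw [map_sum, finset_sum_comp, comp_finset_sum]
      refine Finset.sum_congr rfl fun k _ => ?_
      simp only [map_mul, map_star, star_eq_adjoint, adjoint_comp, mul_def]
      simp only [comp_assoc]
    · intro x y
      simp only [LinearMap.coe_mk, AddHom.coe_mk]
      rw [← hrep x y]
      simp only [adjoint_comp, adjoint_adjoint, ← comp_assoc]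
      rw [comp_assoc (adjoint V ∘L adjoint (πX x)) W (adjoint W), hW, one_def, comp_id]
  · intro t x
    rw [hcov]
    simp only [← comp_assoc]
    rw [hWw]
    rw [comp_assoc _ (adjoint (v t)) V, hvV]
    simp only [comp_assoc]
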